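/- Let f : [a,b] → ℝ be continuous and integrable on [a,b] with 0 ≤ a < b, let l ≥ 1, and suppose |f|^l is m-convex for some fixed m ∈ (0,1]. Then for any fixed p, q > 0, ∫_a^b (x-a)^p (b-x)^q f(x) dx ≤ (b-a)^{p+q+1} [β(p+1, q+1)]^{(l-1)/l} [β(q+2, p+1)|f(a)|^l + m β(q+1, p+2)|f(b/m)|^l]^{1/l}. -/

import Mathlib

open Real Set MeasureTheory intervalIntegral

noncomputable def beta (x y : ℝ) : ℝ := ∫ t in (0:ℝ)..1, t ^ (x-1) * (1-t) ^ (y-1)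

def MConvexOn (s : Set ℝ) (m : ℝ) (g : ℝ → ℝ) : Prop :=
  ∀ x ∈ s, ∀ y ∈ s, ∀ t ∈ Set.Icc (0:ℝ) 1, g (t*x + m*(1-t)*y) ≤ t * g x + m*(1-t) * g y

lemma beta_nonneg (x y : ℝ) : 0 ≤ beta x y := by
  apply intervalIntegral.integral_nonneg zero_le_one
  intro t ht
  exact mul_nonneg (Real.rpow_nonneg ht.1 _) (Real.rpow_nonneg (by linarith [ht.2]) _)

lemma beta_symm (x y : ℝ) : beta x y = beta y x := by
  have h := intervalIntegral.integral_comp_sub_left (a := 0) (b := 1)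
      (fun t => t ^ (y-1) * (1-t) ^ (x-1)) 1
  simp only [sub_zero, sub_self] at h
  unfold beta
  rw [← h]
  apply intervalIntegral.integral_congr
  intro t _
  simp only [sub_sub_cancel]
  ring

lemma intw (a b α γ : ℝ) (hab : a < b) (hα : 0 < α) (hγ : 0 < γ) :
    (∫ x in a..b, (x - a) ^ α * (b - x) ^ γ)
      = (b - a) ^ (α + γ + 1) * beta (α + 1) (γ + 1) := by
  have hc : (0:ℝ) < b - a := sub_pos.2 hab
  have h := intervalIntegral.integral_comp_mul_add
      (a := 0) (b := 1) (fun x => (x - a) ^ α * (b - x) ^ γ) hc.ne' a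
  simp only [mul_zero, zero_add, mul_one, smul_eq_mul, sub_add_cancel] at h
  have h2 : (∫ t in (0:ℝ)..1, ((b-a)*t + a - a) ^ α * (b - ((b-a)*t + a)) ^ γ)
      = (b-a)^(α+γ) * ∫ t in (0:ℝ)..1, t ^ α * (1-t) ^ γ := by
    rw [← intervalIntegral.integral_const_mul]
    apply intervalIntegral.integral_congr
    intro t ht
    rw [Set.uIcc_of_le zero_le_one] at ht
    simp only []
    have h3 : (b-a)*t + a - a = (b-a)*t := by ring
    have h4 : b - ((b-a)*t + a) = (b-a)*(1-t) := by ring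
    rw [h3, h4, Real.mul_rpow hc.le ht.1, Real.mul_rpow hc.le (by linarith [ht.2]),
      Real.rpow_add' hc.le (by positivity)]
    ring
  rw [h2] at h
  have hbeta : beta (α+1) (γ+1) = ∫ t in (0:ℝ)..1, t ^ α * (1-t) ^ γ := by
    unfold beta
    simp only [add_sub_cancel_right]
  rw [hbeta, Real.rpow_add' hc.le (by positivity), Real.rpow_one]
  have := h.symm
  field_simp at this ⊢
  linarith [this]

lemma holder_aux (a b l : ℝ) (w f : ℝ → ℝ) (hl1 : 1 < l)
    (hwc : Continuous w)
    (hwnn : ∀ x ∈ Icc a b, 0 ≤ w x)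
    (hcont : ContinuousOn f (Set.Icc a b)) :
    ∫ x in Ioc a b, w x * |f x| ≤ (∫ x in Ioc a b, w x) ^ ((l-1)/l)
      * (∫ x in Ioc a b, w x * |f x| ^ l) ^ (1/l) := by
  have hl0 : (0:ℝ) < l := by linarith
  have hIoc : MeasurableSet (Ioc a b) := measurableSet_Ioc
  haveI hfin : IsFiniteMeasure (volume.restrict (Ioc a b)) :=
    ⟨by rw [Measure.restrict_apply_univ, Real.volume_Ioc]; exact ENNReal.ofReal_lt_top⟩
  have hmono : volume.restrict (Ioc a b) ≤ volume.restrict (Icc a b) :=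
    Measure.restrict_mono Ioc_subset_Icc_self le_rfl
  have hfm : AEStronglyMeasurable f (volume.restrict (Ioc a b)) :=
    (hcont.aestronglyMeasurable measurableSet_Icc).mono_measure hmono
  have hfabs : AEStronglyMeasurable (fun x => |f x|) (volume.restrict (Ioc a b)) := by
    simpa [Real.norm_eq_abs] using hfm.norm
  set r := Real.conjExponent l with hr
  have hpq : r.HolderConjugate l := (Real.HolderConjugate.conjExponent hl1).symm
  have hrpos : 0 < r := hpq.pos
  have hrinv : 1/r = (l-1)/l := by rw [hr, Real.conjExponent, one_div_div]
  have hsum : 1/r + 1/l = 1 := by simpa [one_div] using hpq.inv_add_inv_eq_one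
  set F : ℝ → ℝ := fun x => w x ^ (1/r) with hF
  set G : ℝ → ℝ := fun x => w x ^ (1/l) * |f x| with hG
  have hFc : Continuous F := hwc.rpow_const (fun x => Or.inr (by positivity))
  have hGc : ContinuousOn G (Icc a b) :=
    ((hwc.rpow_const (fun x => Or.inr (by positivity))).continuousOn).mul hcont.abs
  obtain ⟨CF, hCF⟩ := isCompact_Icc.exists_bound_of_continuousOn hFc.continuousOn
  obtain ⟨CG, hCG⟩ := isCompact_Icc.exists_bound_of_continuousOn hGc
  have hFmem : MemLp F (ENNReal.ofReal r) (volume.restrict (Ioc a b)) := by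
    apply MemLp.of_bound hFc.aestronglyMeasurable CF
    filter_upwards [ae_restrict_mem hIoc] with x hx
    exact hCF x (Ioc_subset_Icc_self hx)
  have hGm : AEStronglyMeasurable G (volume.restrict (Ioc a b)) :=
    ((hwc.rpow_const (fun x => Or.inr (by positivity))).aestronglyMeasurable).mul hfabs
  have hGmem : MemLp G (ENNReal.ofReal l) (volume.restrict (Ioc a b)) := by
    apply MemLp.of_bound hGm CG
    filter_upwards [ae_restrict_mem hIoc] with x hx
    exact hCG x (Ioc_subset_Icc_self hx)
  have hFnn : 0 ≤ᵐ[volume.restrict (Ioc a b)] F := by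
    filter_upwards [ae_restrict_mem hIoc] with x hx
    exact Real.rpow_nonneg (hwnn x (Ioc_subset_Icc_self hx)) _
  have hGnn : 0 ≤ᵐ[volume.restrict (Ioc a b)] G := by
    filter_upwards [ae_restrict_mem hIoc] with x hx
    exact mul_nonneg (Real.rpow_nonneg (hwnn x (Ioc_subset_Icc_self hx)) _) (abs_nonneg _)
  have key := MeasureTheory.integral_mul_le_Lp_mul_Lq_of_nonneg hpq hFnn hGnn hFmem hGmem
  have e1 : (∫ x in Ioc a b, F x * G x) = ∫ x in Ioc a b, w x * |f x| := by
    apply MeasureTheory.integral_congr_ae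
    filter_upwards [ae_restrict_mem hIoc] with x hx
    have hwx := hwnn x (Ioc_subset_Icc_self hx)
    rw [hF, hG]
    simp only []
    rw [← mul_assoc, ← Real.rpow_add' hwx (by rw [hsum]; norm_num), hsum, Real.rpow_one]
  have e2 : (∫ x in Ioc a b, F x ^ r) = ∫ x in Ioc a b, w x := by
    apply MeasureTheory.integral_congr_ae
    filter_upwards [ae_restrict_mem hIoc] with x hx
    have hwx := hwnn x (Ioc_subset_Icc_self hx)
    rw [hF]
    simp only []
    rw [← Real.rpow_mul hwx, one_div_mul_cancel hrpos.ne', Real.rpow_one]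
  have e3 : (∫ x in Ioc a b, G x ^ l) = ∫ x in Ioc a b, w x * |f x| ^ l := by
    apply MeasureTheory.integral_congr_ae
    filter_upwards [ae_restrict_mem hIoc] with x hx
    have hwx := hwnn x (Ioc_subset_Icc_self hx)
    rw [hG]
    simp only []
    rw [Real.mul_rpow (Real.rpow_nonneg hwx _) (abs_nonneg _),
      ← Real.rpow_mul hwx, one_div_mul_cancel hl0.ne', Real.rpow_one]
  rw [e1, e2, e3, hrinv] at key
  exact key

theorem stmt11 (a b p q : ℝ) (f : ℝ → ℝ)
    (ha : 0 ≤ a) (hab : a < b) (hp : 0 < p) (hq : 0 < q)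
    (hcont : ContinuousOn f (Set.Icc a b))
    (hint : IntervalIntegrable f volume a b)
    (l : ℝ) (hl : 1 ≤ l)
    (m : ℝ) (hm : m ∈ Set.Ioc (0:ℝ) 1)
    (hf : MConvexOn (Set.Icc 0 (b/m)) m (fun x => |f x| ^ l)) :
    ∫ x in a..b, (x-a)^p * (b-x)^q * f x
      ≤ (b-a)^(p+q+1) * (beta (p+1) (q+1))^((l-1)/l)
          * (beta (q+2) (p+1) * |f a| ^ l + m * beta (q+1) (p+2) * |f (b/m)| ^ l) ^ (1/l) := by
  obtain ⟨hm0, hm1⟩ := hm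
  have hb : 0 < b := lt_of_le_of_lt ha hab
  have hc : (0:ℝ) < b - a := sub_pos.2 hab
  have hl0 : (0:ℝ) < l := lt_of_lt_of_le one_pos hl
  have hIoc : MeasurableSet (Ioc a b) := measurableSet_Ioc
  set w : ℝ → ℝ := fun x => (x - a)^p * (b - x)^q with hw
  set A : ℝ := |f a| ^ l with hA
  set Bf : ℝ := |f (b/m)| ^ l with hBf
  set S : ℝ := beta (q+2) (p+1) * A + m * beta (q+1) (p+2) * Bf with hS
  have hAnn : 0 ≤ A := Real.rpow_nonneg (abs_nonneg _) _
  have hBfnn : 0 ≤ Bf := Real.rpow_nonneg (abs_nonneg _) _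
  have hSnn : 0 ≤ S := by
    have h1 := beta_nonneg (q+2) (p+1)
    have h2 := beta_nonneg (q+1) (p+2)
    rw [hS]
    positivity
  have hwc : Continuous w := by
    rw [hw]
    apply Continuous.mul
    · exact (continuous_id.sub continuous_const).rpow_const (fun x => Or.inr hp.le)
    · exact (continuous_const.sub continuous_id).rpow_const (fun x => Or.inr hq.le)
  have hwnn : ∀ x ∈ Icc a b, 0 ≤ w x := by
    intro x hx
    rw [hw]
    exact mul_nonneg (Real.rpow_nonneg (sub_nonneg.2 hx.1) _)
      (Real.rpow_nonneg (sub_nonneg.2 hx.2) _)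
  have habs : ContinuousOn (fun x => |f x| ^ l) (Icc a b) :=
    (hcont.abs).rpow_const (fun x _ => Or.inr hl0.le)
  -- convexity bound
  have hconv : ∀ x ∈ Icc a b,
      |f x| ^ l ≤ (b - x)/(b-a) * A + m * ((x - a)/(b-a)) * Bf := by
    intro x hx
    have ht : (b - x)/(b-a) ∈ Icc (0:ℝ) 1 :=
      ⟨div_nonneg (by linarith [hx.2]) hc.le, by rw [div_le_one hc]; linarith [hx.1]⟩
    have hbm : b ≤ b / m := by
      rw [le_div_iff₀ hm0]; nlinarith
    have h := hf a ⟨ha, by linarith⟩ (b/m) ⟨by positivity, le_refl _⟩ _ ht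
    have hx' : (b - x)/(b-a) * a + m * (1 - (b-x)/(b-a)) * (b/m) = x := by
      field_simp
      ring
    have h1t : 1 - (b - x)/(b-a) = (x - a)/(b-a) := by
      field_simp
      ring
    rw [hx', h1t] at h
    exact h
  -- integrability facts
  have hintwf : IntegrableOn (fun x => w x * f x) (Ioc a b) :=
    ((hwc.continuousOn.mul hcont).integrableOn_Icc).mono_set Ioc_subset_Icc_self
  have hintwaf : IntegrableOn (fun x => w x * |f x|) (Ioc a b) :=
    ((hwc.continuousOn.mul hcont.abs).integrableOn_Icc).mono_set Ioc_subset_Icc_self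
  have hintwfl : IntegrableOn (fun x => w x * |f x| ^ l) (Ioc a b) :=
    ((hwc.continuousOn.mul habs).integrableOn_Icc).mono_set Ioc_subset_Icc_self
  have hphic : Continuous (fun x : ℝ => (b - x)/(b-a) * A + m * ((x - a)/(b-a)) * Bf) := by
    fun_prop
  have hintphi : IntegrableOn
      (fun x => w x * ((b - x)/(b-a) * A + m * ((x - a)/(b-a)) * Bf)) (Ioc a b) :=
    (((hwc.mul hphic).continuousOn).integrableOn_Icc).mono_set Ioc_subset_Icc_self
  -- value of ∫ φ
  have hint1 : (∫ x in a..b, (x - a)^p * (b - x)^(q+1))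
      = (b-a)^(p+q+2) * beta (p+1) (q+2) := by
    have h := intw a b p (q+1) hab hp (by linarith)
    rw [show p+(q+1)+1 = p+q+2 by ring, show q+1+1 = q+2 by ring] at h
    exact h
  have hint2 : (∫ x in a..b, (x - a)^(p+1) * (b - x)^q)
      = (b-a)^(p+q+2) * beta (p+2) (q+1) := by
    have h := intw a b (p+1) q hab (by linarith) hq
    rw [show p+1+q+1 = p+q+2 by ring, show p+1+1 = p+2 by ring] at h
    exact h
  have cont1 : ∀ e : ℝ, 0 < e → Continuous fun x : ℝ => (x - a) ^ e := fun e he =>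
    (continuous_id.sub continuous_const).rpow_const (fun x => Or.inr he.le)
  have cont2 : ∀ e : ℝ, 0 < e → Continuous fun x : ℝ => (b - x) ^ e := fun e he =>
    (continuous_const.sub continuous_id).rpow_const (fun x => Or.inr he.le)
  have hphi : (∫ x in Ioc a b, w x * ((b - x)/(b-a) * A + m * ((x - a)/(b-a)) * Bf))
      = (b-a)^(p+q+1) * S := by
    rw [← intervalIntegral.integral_of_le hab.le]
    have congr1 : ∀ x ∈ Set.uIcc a b,
        w x * ((b - x)/(b-a) * A + m * ((x - a)/(b-a)) * Bf)
          = A/(b-a) * ((x-a)^p * (b-x)^(q+1)) + m*Bf/(b-a) * ((x-a)^(p+1) * (b-x)^q) := by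
      intro x hx
      rw [Set.uIcc_of_le hab.le] at hx
      have e1 : (b-x)^(q+1) = (b-x)^q * (b-x) := by
        rw [Real.rpow_add' (sub_nonneg.2 hx.2) (by positivity), Real.rpow_one]
      have e2 : (x-a)^(p+1) = (x-a)^p * (x-a) := by
        rw [Real.rpow_add' (sub_nonneg.2 hx.1) (by positivity), Real.rpow_one]
      rw [e1, e2, hw]
      simp only []
      field_simp
    rw [intervalIntegral.integral_congr congr1,
      intervalIntegral.integral_add (f := fun x => A/(b-a) * ((x-a)^p * (b-x)^(q+1)))
          (g := fun x => m*Bf/(b-a) * ((x-a)^(p+1) * (b-x)^q))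
        ((continuous_const.mul ((cont1 p hp).mul (cont2 (q+1) (by linarith)))).intervalIntegrable a b)
        ((continuous_const.mul ((cont1 (p+1) (by linarith)).mul (cont2 q hq))).intervalIntegrable a b),
      intervalIntegral.integral_const_mul, intervalIntegral.integral_const_mul,
      hint1, hint2, beta_symm (p+1) (q+2), beta_symm (p+2) (q+1), hS,
      show p+q+2 = (p+q+1)+1 by ring, Real.rpow_add_one hc.ne']
    field_simp
  -- main chain
  have hJnn : 0 ≤ ∫ x in Ioc a b, w x :=
    setIntegral_nonneg hIoc (fun x hx => hwnn x (Ioc_subset_Icc_self hx))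
  have hKnn : 0 ≤ ∫ x in Ioc a b, w x * |f x| ^ l :=
    setIntegral_nonneg hIoc (fun x hx =>
      mul_nonneg (hwnn x (Ioc_subset_Icc_self hx)) (Real.rpow_nonneg (abs_nonneg _) _))
  have hJval : (∫ x in Ioc a b, w x) = (b-a)^(p+q+1) * beta (p+1) (q+1) := by
    rw [← intervalIntegral.integral_of_le hab.le, hw]
    exact intw a b p q hab hp hq
  have step1 : (∫ x in Ioc a b, w x * f x) ≤ ∫ x in Ioc a b, w x * |f x| := by
    apply setIntegral_mono_on hintwf hintwaf hIoc
    intro x hx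
    exact mul_le_mul_of_nonneg_left (le_abs_self _) (hwnn x (Ioc_subset_Icc_self hx))
  have holder : (∫ x in Ioc a b, w x * |f x|) ≤ (∫ x in Ioc a b, w x) ^ ((l-1)/l)
      * (∫ x in Ioc a b, w x * |f x| ^ l) ^ (1/l) := by
    rcases eq_or_lt_of_le hl with heq | hl1
    · subst heq
      simp only [sub_self, zero_div, Real.rpow_zero, one_mul, div_self one_ne_zero,
        Real.rpow_one]
      exact le_rfl
    · exact holder_aux a b l w f hl1 hwc hwnn hcont
  have step3 : (∫ x in Ioc a b, w x * |f x| ^ l) ≤ (b-a)^(p+q+1) * S := by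
    rw [← hphi]
    apply setIntegral_mono_on hintwfl hintphi hIoc
    intro x hx
    exact mul_le_mul_of_nonneg_left (hconv x (Ioc_subset_Icc_self hx))
      (hwnn x (Ioc_subset_Icc_self hx))
  have hgoal : (∫ x in a..b, (x-a)^p * (b-x)^q * f x) = ∫ x in Ioc a b, w x * f x := by
    rw [intervalIntegral.integral_of_le hab.le, hw]
  rw [hgoal]
  calc (∫ x in Ioc a b, w x * f x)
      ≤ ∫ x in Ioc a b, w x * |f x| := step1
    _ ≤ (∫ x in Ioc a b, w x) ^ ((l-1)/l)
        * (∫ x in Ioc a b, w x * |f x| ^ l) ^ (1/l) := holder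
    _ ≤ (∫ x in Ioc a b, w x) ^ ((l-1)/l) * ((b-a)^(p+q+1) * S) ^ (1/l) := by
        apply mul_le_mul_of_nonneg_left _ (Real.rpow_nonneg hJnn _)
        exact Real.rpow_le_rpow hKnn step3 (by positivity)
    _ = (b-a)^(p+q+1) * (beta (p+1) (q+1))^((l-1)/l) * S ^ (1/l) := by
        rw [hJval, Real.mul_rpow (Real.rpow_nonneg hc.le _) (beta_nonneg _ _),
          Real.mul_rpow (Real.rpow_nonneg hc.le _) hSnn]
        have hcP : (0:ℝ) < (b-a)^(p+q+1) := Real.rpow_pos_of_pos hc _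
        have hmm : ((b-a)^(p+q+1)) ^ ((l-1)/l) * ((b-a)^(p+q+1)) ^ (1/l)
            = (b-a)^(p+q+1) := by
          rw [← Real.rpow_add hcP, show (l-1)/l + 1/l = 1 by field_simp; ring, Real.rpow_one]
        rw [mul_mul_mul_comm, hmm, ← mul_assoc]
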